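/- With P_n defined by the recursion P₀ = 1, P₁(z) = z, P_{n+1}(z) = z P_n(z) + β_n P_{n-1}(z), where β_n = n + 2 for odd n and β_n = n for even n, the squared norm h_n := ⟨P_n, P_n⟩ = ∫_{ℝ³} conj(P_n(z)) P_n(z) dμ(z) equals n!·(n+2) if n is odd and (n+1)! if n is even. -/

import Mathlib

open MeasureTheory Real Quaternion Polynomial
open Set

noncomputable def pureQ (x : Fin 3 → ℝ) : ℍ[ℝ] := ⟨0, x 0, x 1, x 2⟩

noncomputable def gaussDens (x : Fin 3 → ℝ) : ℝ :=
  (2 * π) ^ (-(3 : ℝ) / 2) * Real.exp (-(x 0 ^ 2 + x 1 ^ 2 + x 2 ^ 2) / 2)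

noncomputable def β (n : ℕ) : ℝ := if Odd n then n + 2 else n

noncomputable def P : ℕ → Polynomial ℝ
  | 0 => 1
  | 1 => X
  | (n + 2) => X * P (n + 1) + C (β (n + 1)) * P n


/-- Gaussian moments: mom m = (m-1)!! for even m, 0 for odd. -/
noncomputable def mom : ℕ → ℝ
  | 0 => 1
  | 1 => 0
  | (m + 2) => (m + 1) * mom m

noncomputable def Efun (p : Polynomial ℝ) : ℝ := p.sum fun m a => a * mom m

lemma Efun_zero : Efun (0 : Polynomial ℝ) = 0 := by simp [Efun]

lemma Efun_add (p q : Polynomial ℝ) : Efun (p + q) = Efun p + Efun q := by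
  unfold Efun
  exact Polynomial.sum_add_index p q _ (by simp) (by intros; ring)

lemma Efun_monomial (m : ℕ) (a : ℝ) : Efun (monomial m a) = a * mom m := by
  unfold Efun
  exact Polynomial.sum_monomial_index a _ (by simp)

lemma Efun_X_pow (m : ℕ) : Efun ((X : Polynomial ℝ) ^ m) = mom m := by
  rw [← Polynomial.monomial_one_right_eq_X_pow, Efun_monomial, one_mul]

lemma Efun_C_mul (a : ℝ) (p : Polynomial ℝ) : Efun (C a * p) = a * Efun p := by
  rw [← smul_eq_C_mul]
  unfold Efun
  rw [Polynomial.sum_smul_index p a _ (by simp)]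
  simp only [Polynomial.sum, Finset.mul_sum]
  exact Finset.sum_congr rfl (fun i _ => by ring)

lemma mom_odd : ∀ m, mom (2 * m + 1) = 0 := by
  intro m
  induction m with
  | zero => simp [mom]
  | succ k ih => rw [show 2 * (k+1) + 1 = (2*k+1) + 2 by ring, mom, ih, mul_zero]

/-- Probabilists' Hermite polynomials. -/
noncomputable def Hp : ℕ → Polynomial ℝ
  | 0 => 1
  | 1 => X
  | (n + 2) => X * Hp (n + 1) - C ((n : ℝ) + 1) * Hp n

lemma Hp_monic : ∀ n, (Hp n).Monic ∧ (Hp n).natDegree = n := by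
  intro n
  induction n using Nat.strong_induction_on with
  | _ n ih =>
    match n with
    | 0 => exact ⟨monic_one, natDegree_one⟩
    | 1 => exact ⟨monic_X, natDegree_X⟩
    | (n + 2) =>
      obtain ⟨h1, d1⟩ := ih (n+1) (by omega)
      obtain ⟨h0, d0⟩ := ih n (by omega)
      have hm : (X * Hp (n+1)).Monic := (monic_X).mul h1
      have hd : (X * Hp (n+1)).natDegree = n + 2 := by
        rw [natDegree_mul X_ne_zero h1.ne_zero, natDegree_X, d1]; omega
      have hlt : (C ((n : ℝ) + 1) * Hp n).degree < (X * Hp (n+1)).degree := by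
        rw [degree_eq_natDegree hm.ne_zero, hd]
        calc (C ((n : ℝ) + 1) * Hp n).degree ≤ ((C ((n : ℝ) + 1) * Hp n).natDegree : WithBot ℕ) :=
              degree_le_natDegree
          _ ≤ ((n : ℕ) : WithBot ℕ) := by
              exact_mod_cast (natDegree_C_mul_le _ _).trans (le_of_eq d0)
          _ < ((n + 2 : ℕ) : WithBot ℕ) := by exact_mod_cast by omega
      constructor
      · show (X * Hp (n+1) - C ((n : ℝ) + 1) * Hp n).Monic
        exact hm.sub_of_left hlt
      · show (X * Hp (n+1) - C ((n : ℝ) + 1) * Hp n).natDegree = n + 2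
        rw [← hd]
        exact natDegree_sub_eq_left_of_natDegree_lt
          (by
            have := hlt
            rw [hd] at *
            have h2 : (C ((n : ℝ) + 1) * Hp n).natDegree ≤ n := natDegree_C_mul_le _ _ |>.trans (by rw [d0])
            omega)

lemma Efun_neg (p : Polynomial ℝ) : Efun (-p) = -Efun p := by
  have := Efun_C_mul (-1) p
  simpa using this

lemma Efun_sub (p q : Polynomial ℝ) : Efun (p - q) = Efun p - Efun q := by
  rw [sub_eq_add_neg, Efun_add, Efun_neg]; ring

noncomputable def tval (n j : ℕ) : ℝ :=
  ((n + 2 * j).factorial : ℝ) / (2 ^ j * (j.factorial : ℝ))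

lemma tval_zero (n : ℕ) : tval n 0 = (n.factorial : ℝ) := by
  simp [tval]

lemma tval_rec (n j : ℕ) :
    tval (n + 1) (j + 1) - ((n : ℝ) + 1) * tval n (j + 1) = tval (n + 2) j := by
  unfold tval
  have h1 : n + 1 + 2 * (j + 1) = (n + 2 * j + 2) + 1 := by ring
  have h2 : n + 2 * (j + 1) = n + 2 * j + 2 := by ring
  have h3 : n + 2 + 2 * j = n + 2 * j + 2 := by ring
  rw [h1, h2, h3, Nat.factorial_succ, Nat.factorial_succ j]
  have hj : (j.factorial : ℝ) ≠ 0 := by exact_mod_cast j.factorial_ne_zero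
  have h2j : (2 : ℝ) ^ j ≠ 0 := by positivity
  push_cast
  field_simp
  ring

lemma mom_two_mul (j : ℕ) :
    mom (2 * j) = ((2 * j).factorial : ℝ) / (2 ^ j * (j.factorial : ℝ)) := by
  induction j with
  | zero => simp [mom]
  | succ k ih =>
    have h : 2 * (k + 1) = (2 * k) + 2 := by ring
    rw [h, mom, ih]
    have hk : (k.factorial : ℝ) ≠ 0 := by exact_mod_cast k.factorial_ne_zero
    have h2k : (2 : ℝ) ^ k ≠ 0 := by positivity
    rw [show (2*k) + 2 = ((2*k)+1)+1 by ring, Nat.factorial_succ, Nat.factorial_succ,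
      Nat.factorial_succ k]
    push_cast
    field_simp
    ring

lemma tval_zero' (j : ℕ) : tval 0 j = mom (2 * j) := by
  rw [mom_two_mul, tval]; norm_num

lemma tval_one (j : ℕ) : tval 1 j = mom (2 * j + 2) := by
  rw [show 2 * j + 2 = 2 * (j + 1) by ring, mom_two_mul, tval]
  have hk : (j.factorial : ℝ) ≠ 0 := by exact_mod_cast j.factorial_ne_zero
  have h2k : (2 : ℝ) ^ j ≠ 0 := by positivity
  rw [show 2 * (j+1) = (2*j+1)+1 by ring, Nat.factorial_succ, Nat.factorial_succ j,
    show 1 + 2*j = 2*j+1 by ring]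
  push_cast
  field_simp
  ring

theorem Hval : ∀ n j, Efun (Hp n * X ^ (n + 2 * j)) = tval n j := by
  intro n
  induction n using Nat.strong_induction_on with
  | _ n ih =>
    match n with
    | 0 => intro j; simp only [Hp, one_mul, zero_add, Efun_X_pow]; rw [tval_zero']
    | 1 =>
      intro j
      have : Hp 1 * X ^ (1 + 2 * j) = X ^ (2 * j + 2) := by
        simp only [Hp]; ring
      rw [this, Efun_X_pow, tval_one]
    | (n + 2) =>
      intro j
      have e1 : Hp (n + 2) * X ^ (n + 2 + 2 * j) =
          Hp (n + 1) * X ^ ((n + 1) + 2 * (j + 1)) -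
            C ((n : ℝ) + 1) * (Hp n * X ^ (n + 2 * (j + 1))) := by
        show (X * Hp (n + 1) - C ((n : ℝ) + 1) * Hp n) * X ^ (n + 2 + 2 * j) = _
        rw [show (n+1) + 2*(j+1) = n + 2 + 2*j + 1 by ring,
          show n + 2*(j+1) = n + 2 + 2*j by ring]
        ring
      rw [e1, Efun_sub, Efun_C_mul, ih (n+1) (by omega) (j+1), ih n (by omega) (j+1),
        tval_rec]

lemma Efun_X_pow_odd {m : ℕ} (hm : m % 2 = 1) : Efun ((X : Polynomial ℝ) ^ m) = 0 := by
  obtain ⟨k, hk⟩ : ∃ k, m = 2 * k + 1 := ⟨m / 2, by omega⟩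
  rw [hk, Efun_X_pow, mom_odd]

theorem Hzero : ∀ n m, (m < n ∨ (n + m) % 2 = 1) → Efun (Hp n * X ^ m) = 0 := by
  intro n
  induction n using Nat.strong_induction_on with
  | _ n ih =>
    match n with
    | 0 =>
      intro m hm
      have : m % 2 = 1 := by omega
      simp only [Hp, one_mul]
      exact Efun_X_pow_odd this
    | 1 =>
      intro m hm
      have hodd : (1 + m) % 2 = 1 := by omega
      have : Hp 1 * X ^ m = X ^ (m + 1) := by simp only [Hp]; ring
      rw [this]
      exact Efun_X_pow_odd (by omega)
    | (n + 2) =>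
      intro m hm
      have e1 : Hp (n + 2) * X ^ m =
          Hp (n + 1) * X ^ (m + 1) - C ((n : ℝ) + 1) * (Hp n * X ^ m) := by
        show (X * Hp (n + 1) - C ((n : ℝ) + 1) * Hp n) * X ^ m = _
        ring
      rw [e1, Efun_sub, Efun_C_mul]
      rcases eq_or_ne ((n + 2 + m) % 2) 1 with hpar | hpar
      · rw [ih (n+1) (by omega) (m+1) (Or.inr (by omega)),
          ih n (by omega) m (Or.inr (by omega))]
        ring
      · -- parity even, so m < n + 2 with m ≡ n (mod 2); m ≤ n
        have hlt : m < n + 2 := by omega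
        rcases Nat.lt_or_ge m n with h | h
        · rw [ih (n+1) (by omega) (m+1) (Or.inl (by omega)),
            ih n (by omega) m (Or.inl h)]
          ring
        · have hmn : m = n := by omega
          subst hmn
          have v1 := Hval (m + 1) 0
          have v0 := Hval m 0
          rw [show m + 1 + 2 * 0 = m + 1 by ring] at v1
          rw [show m + 2 * 0 = m by ring] at v0
          rw [v1, v0, tval_zero, tval_zero, Nat.factorial_succ]
          push_cast
          ring

lemma Efun_finset_sum {ι : Type*} (s : Finset ι) (f : ι → Polynomial ℝ) :
    Efun (∑ i ∈ s, f i) = ∑ i ∈ s, Efun (f i) := by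
  classical
  induction s using Finset.induction_on with
  | empty => simp [Efun_zero]
  | insert a s hx ih => rw [Finset.sum_insert hx, Finset.sum_insert hx, Efun_add, ih]

theorem ortho (n : ℕ) (p : Polynomial ℝ) (hp : p.degree < n) : Efun (Hp n * p) = 0 := by
  rcases eq_or_ne p 0 with rfl | hp0
  · simp [Efun_zero]
  · have hd : p.natDegree < n := by
      have := degree_eq_natDegree hp0 ▸ hp
      exact_mod_cast this
    conv_lhs => rw [p.as_sum_range]
    rw [Finset.mul_sum, Efun_finset_sum]
    refine Finset.sum_eq_zero fun i hi => ?_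
    rw [← C_mul_X_pow_eq_monomial, show Hp n * (C (p.coeff i) * X ^ i)
        = C (p.coeff i) * (Hp n * X ^ i) by ring, Efun_C_mul,
      Hzero n i (Or.inl (by simp only [Finset.mem_range] at hi; omega)), mul_zero]

theorem genE (m : ℕ) (p : Polynomial ℝ) (hmon : p.Monic) (hdeg : p.natDegree = m) :
    Efun (Hp m * p) = (m.factorial : ℝ) := by
  have key : Efun (Hp m * X ^ m) = (m.factorial : ℝ) := by
    have := Hval m 0
    rw [show m + 2 * 0 = m by ring, tval_zero] at this
    exact this
  have decomp : Hp m * p = Hp m * X ^ m + Hp m * (p - X ^ m) := by ring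
  rw [decomp, Efun_add, key]
  rcases eq_or_ne p (X ^ m) with rfl | hne
  · simp [Efun_zero]
  · have hlt : (p - X ^ m).degree < (m : WithBot ℕ) := by
      have h1 : p.degree = (X ^ m : Polynomial ℝ).degree := by
        rw [degree_X_pow, degree_eq_natDegree hmon.ne_zero, hdeg]
      have := degree_sub_lt h1 hmon.ne_zero (by
        rw [hmon.leadingCoeff, (monic_X_pow m).leadingCoeff])
      rwa [degree_eq_natDegree hmon.ne_zero, hdeg] at this
    rw [ortho m _ hlt, add_zero]



noncomputable def qpoly : ℕ → Polynomial ℝ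
  | 0 => 1
  | 1 => X
  | (n + 2) => X * qpoly (n + 1) - C (β (n + 1)) * qpoly n

lemma β_odd (k : ℕ) : β (2 * k + 1) = 2 * (k : ℝ) + 3 := by
  rw [β, if_pos ⟨k, by omega⟩]; push_cast; ring

lemma β_even (k : ℕ) : β (2 * k) = 2 * (k : ℝ) := by
  rw [β, if_neg (by simp [Nat.odd_iff])]; push_cast; ring

lemma qpoly_E1E2 : ∀ k : ℕ,
    X * qpoly (2 * k) = Hp (2 * k + 1) ∧
    X ^ 2 * qpoly (2 * k + 1) = Hp (2 * k + 3) + C (2 * (k : ℝ) + 3) * Hp (2 * k + 1) := by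
  intro k
  induction k with
  | zero =>
    constructor
    · show X * qpoly 0 = Hp 1
      simp [qpoly, Hp]
    · norm_num
      simp [qpoly, Hp, map_ofNat]
      ring
  | succ k ih =>
    obtain ⟨ih1, ih2⟩ := ih
    have e1 : X * qpoly (2 * (k + 1)) = Hp (2 * (k + 1) + 1) := by
      have hdef : qpoly (2 * k + 2) = X * qpoly (2 * k + 1) - C (β (2 * k + 1)) * qpoly (2 * k) :=
        rfl
      rw [show 2 * (k + 1) = 2 * k + 2 by ring, hdef, β_odd]
      have : X * (X * qpoly (2 * k + 1) - C (2 * (k:ℝ) + 3) * qpoly (2 * k))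
          = X ^ 2 * qpoly (2 * k + 1) - C (2 * (k:ℝ) + 3) * (X * qpoly (2 * k)) := by ring
      rw [this, ih2, ih1, show 2 * k + 2 + 1 = 2 * k + 3 by ring]
      ring
    refine ⟨e1, ?_⟩
    have hq : qpoly (2 * (k + 1) + 1)
        = X * qpoly (2 * k + 2) - C (β (2 * k + 2)) * qpoly (2 * k + 1) := by
      rw [show 2 * (k + 1) + 1 = (2 * k + 1) + 2 by ring]
      rfl
    have hβ : β (2 * k + 2) = 2 * (k : ℝ) + 2 := by
      have := β_even (k + 1)
      rw [show 2 * (k + 1) = 2 * k + 2 by ring] at this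
      rw [this]; push_cast; ring
    have hX2 : X ^ 2 * Hp (2 * k + 3) = Hp (2 * k + 5) + C (4 * (k:ℝ) + 7) * Hp (2 * k + 3)
        + C ((2 * (k:ℝ) + 3) * (2 * (k:ℝ) + 2)) * Hp (2 * k + 1) := by
      have r1 : Hp (2 * k + 5) = X * Hp (2 * k + 4) - C (((2 * k + 3 : ℕ) : ℝ) + 1) * Hp (2 * k + 3) := by
        rw [show 2 * k + 5 = (2 * k + 3) + 2 by ring]; rfl
      have r2 : Hp (2 * k + 4) = X * Hp (2 * k + 3) - C (((2 * k + 2 : ℕ) : ℝ) + 1) * Hp (2 * k + 2) := by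
        rw [show 2 * k + 4 = (2 * k + 2) + 2 by ring]; rfl
      have r3 : Hp (2 * k + 3) = X * Hp (2 * k + 2) - C (((2 * k + 1 : ℕ) : ℝ) + 1) * Hp (2 * k + 1) := by
        rw [show 2 * k + 3 = (2 * k + 1) + 2 by ring]; rfl
      rw [r1, r2]
      rw [r3]
      push_cast
      simp only [map_add, map_mul, map_one, map_ofNat, map_natCast]
      ring
    have e2 : X ^ 2 * qpoly (2 * (k + 1) + 1)
        = X ^ 2 * (X * qpoly (2 * k + 2)) - C (2 * (k:ℝ) + 2) * (X ^ 2 * qpoly (2 * k + 1)) := by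
      rw [hq, hβ]; ring
    rw [e2]
    have e3 : X ^ 2 * (X * qpoly (2 * k + 2)) = X ^ 2 * Hp (2 * k + 3) := by
      rw [show (2 * k + 2 : ℕ) = 2 * (k + 1) by ring, e1, show 2 * (k + 1) + 1 = 2 * k + 3 by ring]
    rw [e3, hX2, ih2, show 2 * (k + 1) + 3 = 2 * k + 5 by ring,
      show 2 * (k + 1) + 1 = 2 * k + 3 by ring]
    push_cast
    simp only [map_add, map_mul, map_one, map_ofNat, map_natCast]
    ring

lemma qpoly_monic : ∀ n, (qpoly n).Monic ∧ (qpoly n).natDegree = n := by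
  intro n
  induction n using Nat.strong_induction_on with
  | _ n ih =>
    match n with
    | 0 => exact ⟨monic_one, natDegree_one⟩
    | 1 => exact ⟨monic_X, natDegree_X⟩
    | (n + 2) =>
      obtain ⟨h1, d1⟩ := ih (n+1) (by omega)
      obtain ⟨h0, d0⟩ := ih n (by omega)
      have hm : (X * qpoly (n+1)).Monic := (monic_X).mul h1
      have hd : (X * qpoly (n+1)).natDegree = n + 2 := by
        rw [natDegree_mul X_ne_zero h1.ne_zero, natDegree_X, d1]; omega
      have hlt : (C (β (n+1)) * qpoly n).degree < (X * qpoly (n+1)).degree := by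
        rw [degree_eq_natDegree hm.ne_zero, hd]
        calc (C (β (n+1)) * qpoly n).degree
            ≤ ((C (β (n+1)) * qpoly n).natDegree : WithBot ℕ) := degree_le_natDegree
          _ ≤ ((n : ℕ) : WithBot ℕ) := by
              exact_mod_cast (natDegree_C_mul_le _ _).trans (le_of_eq d0)
          _ < ((n + 2 : ℕ) : WithBot ℕ) := by exact_mod_cast by omega
      constructor
      · show (X * qpoly (n+1) - C (β (n+1)) * qpoly n).Monic
        exact hm.sub_of_left hlt
      · show (X * qpoly (n+1) - C (β (n+1)) * qpoly n).natDegree = n + 2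
        rw [← hd]
        refine natDegree_sub_eq_left_of_natDegree_lt ?_
        have h2 : (C (β (n+1)) * qpoly n).natDegree ≤ n :=
          (natDegree_C_mul_le _ _).trans (le_of_eq d0)
        omega

theorem Efun_main (n : ℕ) : Efun (X ^ 2 * (qpoly n) ^ 2)
    = if Odd n then (n.factorial : ℝ) * (n + 2) else ((n + 1).factorial : ℝ) := by
  rcases Nat.even_or_odd n with he | ho
  · obtain ⟨k, hk⟩ := he
    have hk' : n = 2 * k := by omega
    subst hk'
    rw [if_neg (by simp [Nat.odd_iff, Nat.even_iff])]
    have e : X ^ 2 * (qpoly (2 * k)) ^ 2 = Hp (2 * k + 1) * Hp (2 * k + 1) := by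
      rw [← (qpoly_E1E2 k).1]; ring
    rw [e, genE (2 * k + 1) (Hp (2 * k + 1)) (Hp_monic _).1 (Hp_monic _).2]
  · obtain ⟨k, hk⟩ := ho
    subst hk
    rw [if_pos ⟨k, rfl⟩]
    obtain ⟨hmon, hdeg⟩ := qpoly_monic (2 * k + 1)
    have e : X ^ 2 * (qpoly (2 * k + 1)) ^ 2
        = Hp (2 * k + 3) * qpoly (2 * k + 1)
          + C (2 * (k : ℝ) + 3) * (Hp (2 * k + 1) * qpoly (2 * k + 1)) := by
      have := (qpoly_E1E2 k).2
      calc X ^ 2 * (qpoly (2 * k + 1)) ^ 2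
          = (X ^ 2 * qpoly (2 * k + 1)) * qpoly (2 * k + 1) := by ring
        _ = _ := by rw [this]; ring
    rw [e, Efun_add, Efun_C_mul, genE (2 * k + 1) _ hmon hdeg,
      ortho (2 * k + 3) _ (by
        rw [degree_eq_natDegree hmon.ne_zero, hdeg]
        exact_mod_cast by omega)]
    push_cast
    ring

noncomputable def AB : ℕ → Polynomial ℝ × Polynomial ℝ
  | 0 => (1, 0)
  | 1 => (0, 1)
  | (n + 2) => (C (β (n + 1)) * (AB n).1 - X * (AB (n + 1)).2,
                (AB (n + 1)).1 + C (β (n + 1)) * (AB n).2)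

lemma AB_parity : ∀ k, (AB (2 * k)).2 = 0 ∧ (AB (2 * k + 1)).1 = 0 := by
  intro k
  induction k with
  | zero => exact ⟨rfl, rfl⟩
  | succ k ih =>
    obtain ⟨ih1, ih2⟩ := ih
    have hA : AB (2 * k + 2) = (C (β (2 * k + 1)) * (AB (2 * k)).1 - X * (AB (2 * k + 1)).2,
        (AB (2 * k + 1)).1 + C (β (2 * k + 1)) * (AB (2 * k)).2) := rfl
    have h2 : (AB (2 * k + 2)).2 = 0 := by rw [hA]; simp [ih1, ih2]
    constructor
    · rw [show 2 * (k + 1) = 2 * k + 2 by ring]; exact h2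
    · have hB : AB (2 * k + 3) = (C (β (2 * k + 2)) * (AB (2 * k + 1)).1 - X * (AB (2 * k + 2)).2,
          (AB (2 * k + 2)).1 + C (β (2 * k + 2)) * (AB (2 * k + 1)).2) := by
        rw [show 2 * k + 3 = (2 * k + 1) + 2 by ring]; rfl
      rw [show 2 * (k + 1) + 1 = 2 * k + 3 by ring, hB]
      simp [ih2, h2]

lemma AB_comp : ∀ k, ((AB (2 * k)).1).comp (X ^ 2) = C ((-1 : ℝ) ^ k) * qpoly (2 * k) ∧
    X * ((AB (2 * k + 1)).2).comp (X ^ 2) = C ((-1 : ℝ) ^ k) * qpoly (2 * k + 1) := by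
  intro k
  induction k with
  | zero =>
    constructor
    · show (1 : Polynomial ℝ).comp (X ^ 2) = C ((-1 : ℝ) ^ 0) * qpoly 0
      simp [qpoly]
    · show X * (1 : Polynomial ℝ).comp (X ^ 2) = C ((-1 : ℝ) ^ 0) * qpoly 1
      simp [qpoly]
  | succ k ih =>
    obtain ⟨ih1, ih2⟩ := ih
    have hA : (AB (2 * k + 2)).1 = C (β (2 * k + 1)) * (AB (2 * k)).1 - X * (AB (2 * k + 1)).2 :=
      rfl
    have hq2 : qpoly (2 * k + 2) = X * qpoly (2 * k + 1) - C (β (2 * k + 1)) * qpoly (2 * k) :=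
      rfl
    have cA : ((AB (2 * k + 2)).1).comp (X ^ 2) = C ((-1 : ℝ) ^ (k + 1)) * qpoly (2 * k + 2) := by
      rw [hA, sub_comp, mul_comp, mul_comp, C_comp, X_comp, hq2, ih1]
      have : X ^ 2 * ((AB (2 * k + 1)).2).comp (X ^ 2)
          = X * (X * ((AB (2 * k + 1)).2).comp (X ^ 2)) := by ring
      rw [this, ih2]
      rw [show ((-1 : ℝ) ^ (k + 1)) = -((-1 : ℝ) ^ k) by ring, map_neg]
      ring
    constructor
    · rw [show 2 * (k + 1) = 2 * k + 2 by ring]; exact cA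
    · have hB : (AB (2 * k + 3)).2 = (AB (2 * k + 2)).1 + C (β (2 * k + 2)) * (AB (2 * k + 1)).2 := by
        rw [show 2 * k + 3 = (2 * k + 1) + 2 by ring]; rfl
      have hq3 : qpoly (2 * k + 3) = X * qpoly (2 * k + 2) - C (β (2 * k + 2)) * qpoly (2 * k + 1) := by
        rw [show 2 * k + 3 = (2 * k + 1) + 2 by ring]; rfl
      rw [show 2 * (k + 1) + 1 = 2 * k + 3 by ring, hB, add_comp, mul_comp, C_comp, mul_add, cA]
      have : X * (C (β (2 * k + 2)) * ((AB (2 * k + 1)).2).comp (X ^ 2))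
          = C (β (2 * k + 2)) * (X * ((AB (2 * k + 1)).2).comp (X ^ 2)) := by ring
      rw [this, ih2, hq3, show ((-1 : ℝ) ^ (k + 1)) = -((-1 : ℝ) ^ k) by ring, map_neg]
      ring

lemma Cpoly_comp (n : ℕ) :
    (((AB n).1) ^ 2 + X * ((AB n).2) ^ 2).comp (X ^ 2) = (qpoly n) ^ 2 := by
  rcases Nat.even_or_odd n with he | ho
  · obtain ⟨k, hk⟩ := he
    have hk' : n = 2 * k := by omega
    subst hk'
    rw [(AB_parity k).1]
    have := (AB_comp k).1
    rw [add_comp, pow_comp, mul_comp, X_comp, pow_comp, this]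
    have hsq : (C ((-1 : ℝ) ^ k)) ^ 2 = 1 := by
      rw [← map_pow, ← pow_mul, pow_mul', neg_one_sq, one_pow, map_one]
    rw [mul_pow, hsq]
    simp
  · obtain ⟨k, hk⟩ := ho
    subst hk
    rw [(AB_parity k).2]
    have := (AB_comp k).2
    rw [add_comp, pow_comp, mul_comp, X_comp, pow_comp]
    have : X ^ 2 * (((AB (2 * k + 1)).2).comp (X ^ 2)) ^ 2
        = (X * ((AB (2 * k + 1)).2).comp (X ^ 2)) ^ 2 := by ring
    rw [this, (AB_comp k).2, mul_pow]
    have hsq : (C ((-1 : ℝ) ^ k)) ^ 2 = 1 := by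
      rw [← map_pow, ← pow_mul, pow_mul', neg_one_sq, one_pow, map_one]
    rw [hsq]
    simp



lemma pureQ_sq (x : Fin 3 → ℝ) :
    pureQ x * pureQ x = (-(x 0 ^ 2 + x 1 ^ 2 + x 2 ^ 2)) • (1 : ℍ[ℝ]) := by
  have h0 : (pureQ x).re = 0 := rfl
  have h1 : (pureQ x).imI = x 0 := rfl
  have h2 : (pureQ x).imJ = x 1 := rfl
  have h3 : (pureQ x).imK = x 2 := rfl
  ext <;> simp [h0, h1, h2, h3] <;> ring

lemma star_pureQ (x : Fin 3 → ℝ) : star (pureQ x) = -pureQ x := by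
  have h0 : (pureQ x).re = 0 := rfl
  ext <;> simp [h0]

lemma P_eval (n : ℕ) (x : Fin 3 → ℝ) :
    aeval (pureQ x) (P n) =
      (eval (x 0 ^ 2 + x 1 ^ 2 + x 2 ^ 2) (AB n).1) • (1 : ℍ[ℝ])
        + (eval (x 0 ^ 2 + x 1 ^ 2 + x 2 ^ 2) (AB n).2) • pureQ x := by
  set t : ℝ := x 0 ^ 2 + x 1 ^ 2 + x 2 ^ 2 with ht
  set z : ℍ[ℝ] := pureQ x with hzdef
  have hz : z * z = (-t) • (1 : ℍ[ℝ]) := pureQ_sq x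
  induction n using Nat.strong_induction_on with
  | _ n ih =>
    match n with
    | 0 => simp [P, AB]
    | 1 => simp [P, AB]
    | (n + 2) =>
      have e1 : aeval z (P (n + 2)) = z * aeval z (P (n + 1)) + (β (n+1)) • aeval z (P n) := by
        show aeval z (X * P (n + 1) + C (β (n + 1)) * P n) = _
        simp [Algebra.smul_def]
      rw [e1, ih (n+1) (by omega), ih n (by omega)]
      have hA : (AB (n + 2)).1 = C (β (n + 1)) * (AB n).1 - X * (AB (n + 1)).2 := rfl
      have hB : (AB (n + 2)).2 = (AB (n + 1)).1 + C (β (n + 1)) * (AB n).2 := rfl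
      rw [hA, hB]
      simp only [eval_add, eval_sub, eval_mul, eval_C, eval_X]
      rw [mul_add, mul_smul_comm, mul_smul_comm, mul_one, hz]
      rw [smul_smul]
      rw [smul_add]
      rw [smul_smul, smul_smul]
      module

lemma star_mul_eval (n : ℕ) (x : Fin 3 → ℝ) :
    star (aeval (pureQ x) (P n)) * aeval (pureQ x) (P n) =
      (eval (x 0 ^ 2 + x 1 ^ 2 + x 2 ^ 2) ((AB n).1 ^ 2 + X * (AB n).2 ^ 2)) • (1 : ℍ[ℝ]) := by
  set t : ℝ := x 0 ^ 2 + x 1 ^ 2 + x 2 ^ 2 with ht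
  set z : ℍ[ℝ] := pureQ x with hzdef
  have hz : z * z = (-t) • (1 : ℍ[ℝ]) := pureQ_sq x
  set a : ℝ := eval t (AB n).1
  set b : ℝ := eval t (AB n).2
  rw [P_eval]
  have star_pureQ' : star z = -z := star_pureQ x
  have hstar : star (a • (1 : ℍ[ℝ]) + b • z) = a • (1 : ℍ[ℝ]) - b • z := by
    rw [star_add, Quaternion.star_smul, Quaternion.star_smul, star_one, star_pureQ']
    rw [smul_neg, ← sub_eq_add_neg]
  rw [hstar]
  rw [sub_mul, mul_add, mul_add, ← hzdef,
    smul_mul_smul_comm a (1 : ℍ[ℝ]) a (1 : ℍ[ℝ]),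
    smul_mul_smul_comm a (1 : ℍ[ℝ]) b z,
    smul_mul_smul_comm b z a (1 : ℍ[ℝ]),
    smul_mul_smul_comm b z b z, one_mul, mul_one, one_mul, hz]
  rw [eval_add, eval_pow, eval_mul, eval_pow, eval_X]
  rw [smul_smul]
  module



noncomputable def Jer (k : ℕ) : ℝ := ∫ x in Ioi (0:ℝ), x ^ (2*k+2) * Real.exp (-x^2/2)

lemma Jer_integrable (k : ℕ) :
    IntegrableOn (fun x : ℝ => x ^ (2*k+2) * Real.exp (-x^2/2)) (Ioi 0) := by
  have h := integrableOn_rpow_mul_exp_neg_mul_sq (b := 1/2) (by norm_num)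
    (s := ((2*k+2 : ℕ) : ℝ)) (by have : (0:ℝ) ≤ ((2*k+2:ℕ):ℝ) := Nat.cast_nonneg _; linarith)
  have : (fun x : ℝ => x ^ (((2*k+2 : ℕ)) : ℝ) * Real.exp (-(1/2) * x ^ 2))
      = fun x : ℝ => x ^ (2*k+2) * Real.exp (-x^2/2) := by
    funext x
    rw [Real.rpow_natCast]
    ring_nf
  rwa [this] at h

lemma Jer_eq (k : ℕ) : Jer k
    = (1/2 : ℝ) ^ (-(((2*k+2 : ℕ) : ℝ) + 1)/2) * (1/2) * Real.Gamma ((((2*k+2 : ℕ):ℝ) + 1)/2) := by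
  rw [← integral_rpow_mul_exp_neg_mul_rpow (p := 2) (q := ((2*k+2 : ℕ) : ℝ))
    (by norm_num) (by have : (0:ℝ) ≤ ((2*k+2:ℕ):ℝ) := Nat.cast_nonneg _; linarith) (by norm_num : (0:ℝ) < 1/2)]
  unfold Jer
  refine setIntegral_congr_fun measurableSet_Ioi (fun x hx => ?_)
  rw [show ((2:ℝ)) = ((2:ℕ) : ℝ) by norm_num, Real.rpow_natCast, Real.rpow_natCast]
  ring_nf

lemma Jer_succ (k : ℕ) : Jer (k+1) = (2*(k:ℝ)+3) * Jer k := by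
  rw [Jer_eq, Jer_eq]
  have h1 : (((2*(k+1)+2 : ℕ) : ℝ) + 1)/2 = ((((2*k+2 : ℕ) : ℝ) + 1)/2) + 1 := by
    push_cast; ring
  rw [h1, Real.Gamma_add_one (by positivity)]
  have h2 : (1/2 : ℝ) ^ (-(((2*(k+1)+2 : ℕ) : ℝ) + 1)/2)
      = (1/2 : ℝ) ^ (-(((2*k+2 : ℕ) : ℝ) + 1)/2) * (1/2 : ℝ) ^ (-1 : ℝ) := by
    rw [← Real.rpow_add (by norm_num)]
    congr 1
    push_cast; ring
  rw [h2]
  rw [Real.rpow_neg_one]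
  push_cast
  field_simp
  ring

lemma Jer_zero : Jer 0 = Real.sqrt (π/2) := by
  rw [Jer_eq]
  have e1 : (-(((2*0+2 : ℕ) : ℝ) + 1)/2) = -(3/2 : ℝ) := by norm_num
  have e2 : ((((2*0+2 : ℕ) : ℝ)) + 1)/2 = (1/2 : ℝ) + 1 := by norm_num
  rw [e1, e2, Real.Gamma_add_one (by norm_num), Real.Gamma_one_half_eq]
  have h2 : (1/2 : ℝ) ^ (-(3/2) : ℝ) = Real.sqrt 8 := by
    rw [one_div, Real.inv_rpow (by norm_num), Real.rpow_neg (by norm_num), inv_inv,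
      show (3/2 : ℝ) = (3:ℝ) * (1/2) by norm_num, Real.rpow_mul (by norm_num),
      show ((2:ℝ) ^ (3:ℝ)) = 8 by
        rw [show (3:ℝ) = ((3:ℕ):ℝ) by norm_num, Real.rpow_natCast]; norm_num,
      ← Real.sqrt_eq_rpow]
  rw [h2]
  have h8 : Real.sqrt 8 = 2 * Real.sqrt 2 := by
    rw [show (8:ℝ) = 2^2 * 2 by norm_num, Real.sqrt_mul (by positivity), Real.sqrt_sq (by norm_num)]
  have hdiv : Real.sqrt (π/2) = Real.sqrt π / Real.sqrt 2 := Real.sqrt_div pi_nonneg 2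
  have hs2 : Real.sqrt 2 * Real.sqrt 2 = 2 := Real.mul_self_sqrt (by norm_num)
  rw [h8, hdiv]
  have hs2ne : Real.sqrt 2 ≠ 0 := by positivity
  field_simp
  linear_combination hs2

lemma Jer_val (k : ℕ) : Jer k = mom (2*k+2) * Real.sqrt (π/2) := by
  induction k with
  | zero =>
    rw [Jer_zero]
    have : mom 2 = 1 := by simp [mom]
    rw [this, one_mul]
  | succ k ih =>
    have hm : mom ((2*k+2)+2) = (((2*k+2 : ℕ) : ℝ) + 1) * mom (2*k+2) := by
      simp [mom]
    rw [Jer_succ, ih, show 2*(k+1)+2 = (2*k+2)+2 by ring, hm]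
    push_cast
    ring

lemma oneD (p : Polynomial ℝ) :
    IntegrableOn (fun y : ℝ => y^2 * Real.exp (-y^2/2) * eval (y^2) p) (Ioi 0) volume ∧
    ∫ y in Ioi (0:ℝ), y^2 * Real.exp (-y^2/2) * eval (y^2) p
      = Efun (X^2 * p.comp (X^2)) * Real.sqrt (π/2) := by
  induction p using Polynomial.induction_on' with
  | add p q hp hq =>
    obtain ⟨hpI, hpE⟩ := hp
    obtain ⟨hqI, hqE⟩ := hq
    constructor
    · simp only [eval_add, mul_add]
      exact hpI.add hqI
    · simp only [eval_add, mul_add]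
      rw [integral_add hpI hqI, hpE, hqE, add_comp, mul_add, Efun_add]
      ring
  | monomial k a =>
    have hfun : (fun y : ℝ => y^2 * Real.exp (-y^2/2) * eval (y^2) (monomial k a))
        = fun y => a * (y^(2*k+2) * Real.exp (-y^2/2)) := by
      funext y
      rw [eval_monomial]
      ring
    have hE : Efun (X^2 * (monomial k a).comp (X^2)) = a * mom (2*k+2) := by
      rw [show (monomial k a : Polynomial ℝ) = C a * X^k from (C_mul_X_pow_eq_monomial).symm,
        mul_comp, C_comp, pow_comp, X_comp,
        show (X:Polynomial ℝ)^2 * (C a * ((X:Polynomial ℝ)^2)^k) = C a * X^(2*k+2) by ring,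
        Efun_C_mul, Efun_X_pow]
    constructor
    · rw [hfun]
      exact (Jer_integrable k).const_mul a
    · rw [hfun, integral_const_mul,
        show (∫ y in Ioi (0:ℝ), y^(2*k+2) * Real.exp (-y^2/2)) = Jer k from rfl, Jer_val, hE]
      ring

lemma threeD (p : Polynomial ℝ) :
    ∫ x : Fin 3 → ℝ, gaussDens x * eval (x 0^2 + x 1^2 + x 2^2) p
      = Efun (X^2 * p.comp (X^2)) := by
  set f : ℝ → ℝ := fun r => (2 * π) ^ (-(3:ℝ)/2) * (Real.exp (-r^2/2) * eval (r^2) p) with hf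
  have step1 : ∫ x : Fin 3 → ℝ, gaussDens x * eval (x 0^2 + x 1^2 + x 2^2) p
      = ∫ y : EuclideanSpace ℝ (Fin 3), f ‖y‖ := by
    rw [← (EuclideanSpace.volume_preserving_symm_measurableEquiv_toLp (Fin 3)).integral_comp
      (MeasurableEquiv.toLp 2 (Fin 3 → ℝ)).symm.measurableEmbedding
      (fun x => gaussDens x * eval (x 0^2 + x 1^2 + x 2^2) p)]
    refine integral_congr_ae (Filter.Eventually.of_forall fun y => ?_)
    have hnorm : ‖y‖^2 = y 0^2 + y 1^2 + y 2^2 := by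
      rw [EuclideanSpace.norm_eq, Real.sq_sqrt (by positivity)]
      simp [Fin.sum_univ_three]
    show gaussDens ((MeasurableEquiv.toLp 2 (Fin 3 → ℝ)).symm y)
        * eval (((MeasurableEquiv.toLp 2 (Fin 3 → ℝ)).symm y) 0 ^ 2
          + ((MeasurableEquiv.toLp 2 (Fin 3 → ℝ)).symm y) 1 ^ 2
          + ((MeasurableEquiv.toLp 2 (Fin 3 → ℝ)).symm y) 2 ^ 2) p = f ‖y‖
    have he : ∀ i, ((MeasurableEquiv.toLp 2 (Fin 3 → ℝ)).symm y) i = y i := fun i => rfl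
    simp only [he, hf, gaussDens, ← hnorm]
    ring
  rw [step1]
  have step2 := MeasureTheory.integral_fun_norm_addHaar
    (volume : Measure (EuclideanSpace ℝ (Fin 3))) f
  rw [finrank_euclideanSpace_fin] at step2
  rw [step2]
  have hball : (volume (Metric.ball (0 : EuclideanSpace ℝ (Fin 3)) 1)).toReal
      = 4 / 3 * π := by
    rw [EuclideanSpace.volume_ball]
    have hΓ : Real.Gamma (((Fintype.card (Fin 3) : ℝ)) / 2 + 1) = 3 / 4 * Real.sqrt π := by
      rw [Fintype.card_fin]
      rw [show ((3:ℕ):ℝ)/2 + 1 = (3:ℝ)/2 + 1 by norm_num,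
        show (3:ℝ)/2 = 1/2 + 1 by norm_num,
        Real.Gamma_add_one (by norm_num), Real.Gamma_add_one (by norm_num),
        Real.Gamma_one_half_eq]
      ring
    rw [hΓ, Fintype.card_fin]
    rw [ENNReal.ofReal_one, one_pow, one_mul, ENNReal.toReal_ofReal (by positivity)]
    have h3 : Real.sqrt π ^ 3 = π * Real.sqrt π := by
      rw [pow_succ, sq_sqrt pi_nonneg]
    rw [h3]
    rw [div_eq_iff (by positivity)]
    have : Real.sqrt π ≠ 0 := by positivity
    field_simp
  rw [measureReal_def, hball]
  have hint : ∫ r in Ioi (0:ℝ), r ^ (3-1) • f r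
      = (2 * π) ^ (-(3:ℝ)/2) * (Efun (X^2 * p.comp (X^2)) * Real.sqrt (π/2)) := by
    have : ∀ r : ℝ, r ^ (3-1) • f r
        = (2 * π) ^ (-(3:ℝ)/2) * (r^2 * Real.exp (-r^2/2) * eval (r^2) p) := by
      intro r
      simp only [hf, smul_eq_mul]
      norm_num
      ring
    rw [show (fun r : ℝ => r ^ (3-1) • f r) = fun r =>
        (2 * π) ^ (-(3:ℝ)/2) * (r^2 * Real.exp (-r^2/2) * eval (r^2) p) from funext this]
    rw [integral_const_mul, (oneD p).2]
  rw [hint, nsmul_eq_mul, smul_eq_mul]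
  have hconst : (3:ℝ) * (4 / 3 * π) * ((2 * π) ^ (-(3:ℝ)/2) * Real.sqrt (π/2)) = 1 := by
    have h1 : (2 * π) ^ (-(3:ℝ)/2) = ((2 * π) ^ ((3:ℝ)/2))⁻¹ := by
      rw [← Real.rpow_neg (by positivity)]
      norm_num
    have h2 : (2 * π) ^ ((3:ℝ)/2) = (2 * π) * Real.sqrt (2 * π) := by
      rw [show (3:ℝ)/2 = 1 + 1/2 by norm_num, Real.rpow_add (by positivity), Real.rpow_one,
        ← Real.sqrt_eq_rpow]
    have h3 : Real.sqrt (2 * π) = Real.sqrt 2 * Real.sqrt π := Real.sqrt_mul (by norm_num) _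
    have h4 : Real.sqrt (π/2) = Real.sqrt π / Real.sqrt 2 := Real.sqrt_div pi_nonneg 2
    have hs2 : Real.sqrt 2 * Real.sqrt 2 = 2 := Real.mul_self_sqrt (by norm_num)
    have hsp : Real.sqrt π * Real.sqrt π = π := Real.mul_self_sqrt pi_nonneg
    rw [h1, h2, h3, h4]
    have hne1 : Real.sqrt 2 ≠ 0 := by positivity
    have hne2 : Real.sqrt π ≠ 0 := by positivity
    have hne3 : π ≠ 0 := pi_ne_zero
    field_simp
    linear_combination (-2)*hs2
  push_cast
  linear_combination Efun (X ^ 2 * p.comp (X ^ 2)) * hconst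

theorem stmt6 (n : ℕ) :
    (∫ x : Fin 3 → ℝ,
        gaussDens x • (star (aeval (pureQ x) (P n)) * aeval (pureQ x) (P n)))
      = algebraMap ℝ ℍ[ℝ]
          (if Odd n then (n.factorial : ℝ) * (n + 2) else ((n + 1).factorial : ℝ)) := by
  have hpt : ∀ x : Fin 3 → ℝ,
      gaussDens x • (star (aeval (pureQ x) (P n)) * aeval (pureQ x) (P n))
        = (gaussDens x * eval (x 0 ^ 2 + x 1 ^ 2 + x 2 ^ 2) ((AB n).1 ^ 2 + X * (AB n).2 ^ 2))
            • (1 : ℍ[ℝ]) := by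
    intro x
    rw [star_mul_eval, smul_smul]
  rw [integral_congr_ae (Filter.Eventually.of_forall hpt), integral_smul_const, threeD,
    Cpoly_comp n, Efun_main, Algebra.algebraMap_eq_smul_one]
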